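/- arXiv:2411.08458 — 2 statements merged into one kernel-verified Lean document; each statement's English description precedes it below -/
import Mathlib

section
/- Let H be a hypergraph and K(H) the induced symmetric simplicial set. For nonempty finite subsets I ⊆ f̃(x), I' ⊆ f̃(x') of vertices, defining W_I := U_{[v_i]_x} for any tuple [v_i]_x with underlying vertex set I (which is well-defined), we have: W_I ∩ W_{I'} = W_{I ∪ I'} if there exists x'' ∈ E(H) ⊔ V(H) with I ∪ I' ⊆ f̃(x''), and W_I ∩ W_{I'} = ∅ otherwise. -/
/-- A hypergraph: edge set `E`, vertex set `V`, and a structure map `f` assigning to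
each edge a nonempty set of vertices that is not a single vertex. -/
structure KHypergraph where
  E : Type
  V : Type
  f : E → Set V
  f_nonempty : ∀ e, (f e).Nonempty
  f_not_vertex : ∀ e, ¬ ∃ v, f e = {v}

/-- The extended structure map `f̃ : E ⊔ V → P(V)`. -/
def KHypergraph.ext (H : KHypergraph) : H.E ⊕ H.V → Set H.V :=
  Sum.elim H.f (fun v => {v})

/-- The `n`-simplices of `K(H)`: equivalence classes (identified by their underlying
tuple of vertices) of `(n+1)`-tuples with entries in `f̃(x)` for some `x ∈ E ⊔ V`. -/
def KHypergraph.Tup (H : KHypergraph) (n : ℕ) : Type :=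
  { t : Fin (n + 1) → H.V // ∃ x : H.E ⊕ H.V, ∀ i, t i ∈ H.ext x }

/-- The set of simplices of `K(H)`. -/
def KHypergraph.Simp (H : KHypergraph) : Type := Σ n, H.Tup n

/-- The natural preorder on simplices: `s ≲ u` iff `s = K(H)(μ)(u)` for some
function `μ`, i.e. the tuple of `s` is obtained from that of `u` by precomposition. -/
def KHypergraph.rel (H : KHypergraph) (s u : H.Simp) : Prop :=
  ∃ μ : Fin (s.1 + 1) → Fin (u.1 + 1), u.2.1 ∘ μ = s.2.1

/-- The basic open set `U_s = {u | s ≲ u}`. -/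
def KHypergraph.U (H : KHypergraph) (s : H.Simp) : Set H.Simp :=
  { u | H.rel s u }

lemma KHypergraph.rel_iff (H : KHypergraph) (s u : H.Simp) :
    H.rel s u ↔ Set.range s.2.1 ⊆ Set.range u.2.1 := by
  constructor
  · rintro ⟨μ, hμ⟩
    rintro v ⟨i, rfl⟩
    exact ⟨μ i, congrFun hμ i⟩
  · intro h
    choose μ hμ using fun i => h ⟨i, rfl⟩
    exact ⟨μ, funext hμ⟩

/-- `W_I := U_{[v_i]_x}` for any tuple with vertex set `I` is well defined, and
`W_I ∩ W_{I'} = W_{I ∪ I'}` if `I ∪ I' ⊆ f̃(x'')` for some `x''`, and `= ∅` otherwise. -/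
theorem U_inter_U (H : KHypergraph) (s s' : H.Simp) :
    (∀ s₂ : H.Simp, Set.range s.2.1 = Set.range s₂.2.1 → H.U s = H.U s₂) ∧
    ((∃ x'' : H.E ⊕ H.V, Set.range s.2.1 ∪ Set.range s'.2.1 ⊆ H.ext x'') →
      ∀ s'' : H.Simp, Set.range s''.2.1 = Set.range s.2.1 ∪ Set.range s'.2.1 →
        H.U s ∩ H.U s' = H.U s'') ∧
    (¬ (∃ x'' : H.E ⊕ H.V, Set.range s.2.1 ∪ Set.range s'.2.1 ⊆ H.ext x'') →
      H.U s ∩ H.U s' = ∅) := by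
  refine ⟨fun s₂ h => ?_, fun _ s'' h => ?_, fun h => ?_⟩
  · ext u; simp only [KHypergraph.U, Set.mem_setOf_eq, H.rel_iff, h]
  · ext u
    simp only [KHypergraph.U, Set.mem_inter_iff, Set.mem_setOf_eq, H.rel_iff, h,
      Set.union_subset_iff]
  · ext u
    simp only [Set.mem_inter_iff, KHypergraph.U, Set.mem_setOf_eq, H.rel_iff,
      Set.mem_empty_iff_false, iff_false]
    rintro ⟨h1, h2⟩
    obtain ⟨x, hx⟩ := u.2.2
    have hr : Set.range u.2.1 ⊆ H.ext x := by rintro v ⟨i, rfl⟩; exact hx i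
    exact h ⟨x, Set.union_subset (h1.trans hr) (h2.trans hr)⟩
end

section
/- For any hypergraph H, the symmetric simplicial set K(H) is closed: the collection {∅} ∪ {U_σ : σ ∈ K(H)^} of basic open sets of simplices is closed under finite (binary) intersections. -/
/-- A hypergraph: edge set `E`, vertex set `V`, and a structure map `f` assigning to
each edge a nonempty set of vertices that is not a single vertex. -/
structure Hypergraph' where
  E : Type
  V : Type
  f : E → Set V
  f_nonempty : ∀ e, (f e).Nonempty
  f_not_vertex : ∀ e, ¬ ∃ v, f e = {v}

/-- The extended structure map `f̃ : E ⊔ V → P(V)`. -/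
def Hypergraph'.ext (H : Hypergraph') : H.E ⊕ H.V → Set H.V :=
  Sum.elim H.f (fun v => {v})

/-- The `n`-simplices of `K(H)`: equivalence classes (identified by their underlying
tuple of vertices) of `(n+1)`-tuples with entries in `f̃(x)` for some `x ∈ E ⊔ V`. -/
def Hypergraph'.Tup (H : Hypergraph') (n : ℕ) : Type :=
  { t : Fin (n + 1) → H.V // ∃ x : H.E ⊕ H.V, ∀ i, t i ∈ H.ext x }

/-- The set of simplices of `K(H)`. -/
def Hypergraph'.Simp (H : Hypergraph') : Type := Σ n, H.Tup n

/-- The natural preorder on simplices: `s ≲ u` iff `s = K(H)(μ)(u)` for some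
function `μ`, i.e. the tuple of `s` is obtained from that of `u` by precomposition. -/
def Hypergraph'.rel (H : Hypergraph') (s u : H.Simp) : Prop :=
  ∃ μ : Fin (s.1 + 1) → Fin (u.1 + 1), u.2.1 ∘ μ = s.2.1

/-- The basic open set `U_s = {u | s ≲ u}`. -/
def Hypergraph'.U (H : Hypergraph') (s : H.Simp) : Set H.Simp :=
  { u | H.rel s u }

lemma fin_add_cases {p q : ℕ} (j : Fin (p + q)) :
    (∃ i, j = Fin.castAdd q i) ∨ (∃ i, j = Fin.natAdd p i) :=
  Fin.addCases (motive := fun j => (∃ i, j = Fin.castAdd q i) ∨ (∃ i, j = Fin.natAdd p i))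
    (fun i => Or.inl ⟨i, rfl⟩) (fun i => Or.inr ⟨i, rfl⟩) j

/-- `K(H)` is closed: the collection `{∅} ∪ {U_σ}` of basic open sets of simplices
is closed under binary intersections. -/
theorem KH_closed (H : Hypergraph') (s s' : H.Simp) :
    H.U s ∩ H.U s' = ∅ ∨ ∃ s'' : H.Simp, H.U s ∩ H.U s' = H.U s'' := by
  rcases Set.eq_empty_or_nonempty (H.U s ∩ H.U s') with h | ⟨u, hs, hs'⟩
  · exact Or.inl h
  right
  obtain ⟨μ, hμ⟩ := hs
  obtain ⟨μ', hμ'⟩ := hs'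
  obtain ⟨x, hx⟩ := u.2.2
  set n := s.1
  set m := s'.1
  have hadd : n + 1 + (m + 1) = n + m + 1 + 1 := by omega
  set t : Fin (n + m + 1 + 1) → H.V :=
    (Fin.append s.2.1 s'.2.1) ∘ Fin.cast hadd.symm with ht
  have hval : ∀ i, t i ∈ H.ext x := by
    intro i
    rw [ht]
    simp only [Function.comp_apply]
    rcases fin_add_cases (Fin.cast hadd.symm i) with ⟨j, hj⟩ | ⟨j, hj⟩
    · rw [hj, Fin.append_left, ← hμ]; exact hx _
    · rw [hj, Fin.append_right, ← hμ']; exact hx _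
  refine ⟨⟨n + m + 1, ⟨t, x, hval⟩⟩, ?_⟩
  ext u'
  simp only [Set.mem_inter_iff, Hypergraph'.U, Set.mem_setOf_eq, Hypergraph'.rel]
  constructor
  · rintro ⟨⟨ν, hν⟩, ⟨ν', hν'⟩⟩
    refine ⟨(Fin.addCases ν ν') ∘ Fin.cast hadd.symm, ?_⟩
    funext i
    simp only [Function.comp_apply, ht]
    rcases fin_add_cases (Fin.cast hadd.symm i) with ⟨j, hj⟩ | ⟨j, hj⟩
    · rw [hj, Fin.append_left, Fin.addCases_left, ← hν]; rfl
    · rw [hj, Fin.append_right, Fin.addCases_right, ← hν']; rfl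
  · rintro ⟨ν, hν⟩
    constructor
    · refine ⟨ν ∘ Fin.cast hadd ∘ Fin.castAdd (m+1), ?_⟩
      funext i
      have h1 := congrFun hν (Fin.cast hadd (Fin.castAdd (m+1) i))
      simp only [ht, Function.comp_apply, Fin.cast_cast, Fin.cast_eq_self,
        Fin.append_left] at h1 ⊢
      exact h1.trans (Fin.append_left _ _ _)
    · refine ⟨ν ∘ Fin.cast hadd ∘ Fin.natAdd (n+1), ?_⟩
      funext i
      have h1 := congrFun hν (Fin.cast hadd (Fin.natAdd (n+1) i))
      simp only [ht, Function.comp_apply, Fin.cast_cast, Fin.cast_eq_self,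
        Fin.append_right] at h1 ⊢
      exact h1.trans (Fin.append_right _ _ _)
end
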